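/- arXiv:2203.14058 — 4 statements merged into one kernel-verified Lean document; each statement's English description precedes it below -/
import Mathlib

section
/- Suppose a bag of clients is processed over an ordered list of facilities y₁, …, y_l, where at step l' the bag gains at most β·U_{y_{l'}} new clients (β ≥ 1), and the bag is emptied whenever it contains at least L_{y_{l'}} clients. If either L or U is uniform and L_t ≤ U_t for all t, then at every step the number of clients in the bag just after adding new clients is at most (β+1)·U_{y_{l'}}. -/
/-- Bag invariant: clients are processed over facilities `y_0, …, y_{l-1}` with lower
bounds `L` and upper bounds `U`, `L ≤ U` pointwise and one of the bounds uniform.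
At step `t` the bag gains `N t ≤ β·U t` new clients (`β ≥ 1`); the bag starts empty
and, since the bag is emptied whenever it reaches the current lower bound, just before
step `t ≥ 1` it holds fewer than `L (t-1)` clients. Then just after adding, the bag
holds at most `(β + 1)·U t` clients. -/
theorem stmt_9 (l : ℕ) (L U N bagBefore : ℕ → ℝ) (β : ℝ) (hβ : 1 ≤ β)
    (hL0 : ∀ t < l, 0 ≤ L t)
    (hLU : ∀ t < l, L t ≤ U t)
    (huni : (∀ a < l, ∀ b < l, L a = L b) ∨ (∀ a < l, ∀ b < l, U a = U b))
    (hN0 : ∀ t < l, 0 ≤ N t)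
    (hN : ∀ t < l, N t ≤ β * U t)
    (hbag0 : bagBefore 0 = 0)
    (hbag : ∀ t, 1 ≤ t → t < l → bagBefore t < L (t - 1)) :
    ∀ t < l, bagBefore t + N t ≤ (β + 1) * U t := by
  intro t ht
  have hU0 : 0 ≤ U t := le_trans (hL0 t ht) (hLU t ht)
  have hNt := hN t ht
  rcases Nat.eq_zero_or_pos t with h0 | h1
  · subst h0
    rw [hbag0]
    nlinarith
  · have ht1 : t - 1 < l := lt_of_le_of_lt (Nat.sub_le t 1) ht
    have hb := hbag t h1 ht
    have hLle : L (t - 1) ≤ U t := by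
      rcases huni with h | h
      · rw [h (t-1) ht1 t ht]; exact hLU t ht
      · calc L (t-1) ≤ U (t-1) := hLU _ ht1
          _ = U t := h _ ht1 _ ht
    nlinarith
end

section
/- In the star-processing algorithm, the number of facilities opened while processing a star S_i with leaves η⁻¹(i) = {y₁, …, y_l} is at most l = |η⁻¹(i)|. Consequently, if the second solution opens at most k facilities in total (Σ_i |η⁻¹(i)| ≤ k), the combined solution opens at most k facilities. -/
/-- While processing a star, facilities opened among the leaves `y_1, …, y_{l-1}` together
with exactly one of the star center `i` and the last leaf `y_l` number at most
`l = |η⁻¹(i)|`; summing over all stars, if the second solution opens at most `k`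
facilities in total then the combined solution opens at most `k` facilities. -/
theorem stmt_11 {I F : Type*} [Fintype I] [DecidableEq F]
    (center : I → F) (leaves : I → Finset F) (lastLeaf : I → F)
    (opened : I → Finset F) (k : ℕ)
    (hlast : ∀ i, lastLeaf i ∈ leaves i)
    (hcenter : ∀ i, center i ∉ leaves i)
    (hsub : ∀ i, opened i ⊆ insert (center i) (leaves i))
    (honeOf : ∀ i, ¬ (center i ∈ opened i ∧ lastLeaf i ∈ opened i)) :
    (∀ i : I, (opened i).card ≤ (leaves i).card) ∧
      ((∑ i : I, (leaves i).card) ≤ k → (∑ i : I, (opened i).card) ≤ k) := by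
  have key : ∀ i : I, (opened i).card ≤ (leaves i).card := by
    intro i
    by_cases hc : center i ∈ opened i
    · have hl : lastLeaf i ∉ opened i := fun h => honeOf i ⟨hc, h⟩
      have hsub' : opened i ⊆ insert (center i) ((leaves i).erase (lastLeaf i)) := by
        intro x hx
        rcases Finset.mem_insert.1 (hsub i hx) with h | h
        · exact Finset.mem_insert.2 (Or.inl h)
        · refine Finset.mem_insert.2 (Or.inr (Finset.mem_erase.2 ⟨?_, h⟩))
          rintro rfl; exact hl hx
      calc (opened i).card ≤ (insert (center i) ((leaves i).erase (lastLeaf i))).card :=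
            Finset.card_le_card hsub'
        _ ≤ ((leaves i).erase (lastLeaf i)).card + 1 := Finset.card_insert_le _ _
        _ = (leaves i).card := by
            rw [Finset.card_erase_of_mem (hlast i)]
            exact Nat.succ_pred_eq_of_pos (Finset.card_pos.2 ⟨_, hlast i⟩)
    · have hsub' : opened i ⊆ leaves i := by
        intro x hx
        rcases Finset.mem_insert.1 (hsub i hx) with h | h
        · exact absurd (h ▸ hx) hc
        · exact h
      exact Finset.card_le_card hsub'
  exact ⟨key, fun hk => le_trans (Finset.sum_le_sum fun i _ => key i) hk⟩
end

section
/- If at the moment star S_i is processed, no client of σ̂₁⁻¹(i) has been settled by any earlier-processed star (which holds because the dependency graph restricted to non-loop edges has no edge from S_i to any earlier star in the topological order, and distinct centers have disjoint σ̂₁-fibers), then at least L_i clients of σ̂₁⁻¹(i) are available, i.e., |σ̂₁⁻¹(i) \ Settled| ≥ L_i. -/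
/-- Availability of reserved clients: if the stars processed earlier (centered at the
facilities in `B`) settle only clients whose `σ̂₁`-facility lies in `B` or whose
`σ₂`-facility belongs to a star of `B`, the dependency graph has no edge from `S_i`
to an earlier star (no client of `σ̂₁⁻¹(i)` is `σ₂`-assigned to a leaf of a star in `B`),
and `i ∉ B`, then all of `σ̂₁⁻¹(i)` is still unsettled, so at least `L i` clients of
`σ̂₁⁻¹(i)` are available. -/
theorem stmt_15 {C F₁ F₂ : Type*} [Fintype C] [DecidableEq C] [DecidableEq F₁]
    (σh : C → F₁) (σ₂ : C → F₂) (η : F₂ → F₁) (L : F₁ → ℕ)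
    (hfib : ∀ i : F₁, L i ≤ (Finset.univ.filter (fun j => σh j = i)).card)
    (B : Finset F₁) (i : F₁) (hi : i ∉ B)
    (Settled : Finset C)
    (hSettled : ∀ j ∈ Settled, σh j ∈ B ∨ η (σ₂ j) ∈ B)
    (hnoedge : ∀ j : C, σh j = i → η (σ₂ j) ∉ B) :
    L i ≤ ((Finset.univ.filter (fun j => σh j = i)) \ Settled).card := by
  have hdisj : Disjoint (Finset.univ.filter (fun j => σh j = i)) Settled := by
    rw [Finset.disjoint_left]
    intro j hj hjS
    simp only [Finset.mem_filter] at hj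
    rcases hSettled j hjS with h | h
    · exact hi (hj.2 ▸ h)
    · exact hnoedge j hj.2 h
  rw [Finset.sdiff_eq_self_of_disjoint hdisj]
  exact hfib i
end

section
/- Let β ≥ 0 and suppose either all lower bounds or all upper bounds are uniform with L_t ≤ U_t for all t. If the final group satisfies |Bag ∪ N_{y_l} ∪ Res(i)| > (β+1)·U_i, then Res(i) = ∅; equivalently, if Res(i) ≠ ∅ then |Bag ∪ N_{y_l} ∪ Res(i)| ≤ 2·U_i ≤ (β+1)·U_i when β ≥ 1. -/
/-- With one of the bounds uniform, `L ≤ U` pointwise and `β ≥ 1`: if the final group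
`Bag ∪ N ∪ Res` has more than `(β+1)·U i` clients then no client was reserved
(`Res = ∅`). Here `Res ≠ ∅` forces `|N ∪ Res| = L i`, and the bag satisfies
`|Bag| < L prev` or `|Bag| = 0`. -/
theorem stmt_17 {C F : Type*} [DecidableEq C]
    (L U : F → ℕ) (hLU : ∀ t : F, L t ≤ U t)
    (huni : (∀ r s : F, L r = L s) ∨ (∀ r s : F, U r = U s))
    (β : ℝ) (hβ : 1 ≤ β)
    (i prev : F) (Bag N Res : Finset C)
    (hBN : Disjoint Bag N) (hBR : Disjoint Bag Res) (hNR : Disjoint N Res)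
    (hRes : Res.Nonempty → (N ∪ Res).card = L i)
    (hBag : Bag.card < L prev ∨ Bag.card = 0) :
    (β + 1) * (U i : ℝ) < ((Bag ∪ N ∪ Res).card : ℝ) → Res = ∅ := by
  intro hcard
  by_contra hne
  have hRne : Res.Nonempty := Finset.nonempty_iff_ne_empty.mpr hne
  have hNR' := hRes hRne
  -- |Bag| ≤ U i
  have hBagU : Bag.card ≤ U i := by
    rcases hBag with h | h
    · rcases huni with hL | hU
      · have h2 := hL prev i
        have h3 := hLU i
        omega
      · have h1 : L prev ≤ U prev := hLU prev
        have h2 : U prev = U i := hU prev i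
        omega
    · omega
  have hcard1 : (Bag ∪ N ∪ Res).card ≤ Bag.card + (N ∪ Res).card := by
    rw [Finset.union_assoc]
    exact Finset.card_union_le _ _
  have hLiU : L i ≤ U i := hLU i
  have htot : (Bag ∪ N ∪ Res).card ≤ 2 * U i := by omega
  have h2 : (2 : ℝ) * (U i : ℝ) ≤ (β + 1) * (U i : ℝ) := by
    apply mul_le_mul_of_nonneg_right _ (Nat.cast_nonneg _)
    linarith
  have : ((Bag ∪ N ∪ Res).card : ℝ) ≤ 2 * (U i : ℝ) := by
    exact_mod_cast (by exact_mod_cast htot : ((Bag ∪ N ∪ Res).card : ℝ) ≤ ((2 * U i : ℕ) : ℝ))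
  linarith
end
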